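/- Let A be a complete normed algebra over ℂ (a Banach algebra), let A, B ∈ A and s ∈ ℂ. If the commutator satisfies A·B − B·A = s·B, then exp(A)·exp(B) = exp((e^s)·B)·exp(A). -/

import Mathlib

open NormedSpace in
private lemma pow_mul_braid {𝔄 : Type*} [NormedRing 𝔄] [NormedAlgebra ℂ 𝔄]
    (A B : 𝔄) (s : ℂ) (h : A * B - B * A = s • B) (n : ℕ) :
    A ^ n * B = B * (A + s • 1) ^ n := by
  have base : A * B = B * (A + s • 1) := by
    have h' : A * B = s • B + B * A := eq_add_of_sub_eq h
    rw [h', mul_add, mul_smul_comm, mul_one, add_comm]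
  induction n with
  | zero => simp
  | succ n ih =>
    rw [pow_succ', mul_assoc, ih, ← mul_assoc, base, mul_assoc, ← pow_succ']

open NormedSpace in
private lemma exp_mul_braid {𝔄 : Type*} [NormedRing 𝔄] [NormedAlgebra ℂ 𝔄] [CompleteSpace 𝔄]
    (A B : 𝔄) (s : ℂ) (h : A * B - B * A = s • B) :
    exp A * B = Complex.exp s • (B * exp A) := by
  have h1 : exp A * B = B * exp (A + s • 1) := by
    have eA : exp A = ∑' n : ℕ, ((n.factorial : ℂ))⁻¹ • A ^ n := congrFun (exp_eq_tsum ℂ) A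
    have eA' : exp (A + s • 1) = ∑' n : ℕ, ((n.factorial : ℂ))⁻¹ • (A + s • 1) ^ n :=
      congrFun (exp_eq_tsum ℂ) (A + s • 1)
    rw [eA, eA']
    rw [← (expSeries_summable' (𝕂 := ℂ) A).tsum_mul_right B,
        ← (expSeries_summable' (𝕂 := ℂ) (A + s • 1)).tsum_mul_left B]
    congr 1
    ext n
    rw [smul_mul_assoc, mul_smul_comm, pow_mul_braid A B s h n]
  have hc : Commute A ((s : ℂ) • (1 : 𝔄)) := (Commute.one_right A).smul_right s
  letI : NormedAlgebra ℚ 𝔄 := .restrictScalars ℚ ℂ 𝔄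
  have h2 : exp ((s : ℂ) • (1 : 𝔄)) = Complex.exp s • (1 : 𝔄) := by
    have : (s : ℂ) • (1 : 𝔄) = algebraMap ℂ 𝔄 s := by
      simp [Algebra.algebraMap_eq_smul_one]
    rw [this, ← map_exp (algebraMap ℂ 𝔄) (algebraMapCLM ℂ 𝔄).continuous s,
        Algebra.algebraMap_eq_smul_one, ← Complex.exp_eq_exp_ℂ]
  rw [h1, exp_add_of_commute hc, h2, mul_smul_comm, mul_one, mul_smul_comm]

/-- the braiding identity `exp A * exp B = exp (eˢ • B) * exp A`
in a complex Banach algebra, assuming `[A, B] = s • B`. -/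
theorem exp_braiding {𝔄 : Type*} [NormedRing 𝔄] [NormedAlgebra ℂ 𝔄] [CompleteSpace 𝔄]
    (A B : 𝔄) (s : ℂ) (h : A * B - B * A = s • B) :
    NormedSpace.exp A * NormedSpace.exp B =
      NormedSpace.exp (Complex.exp s • B) * NormedSpace.exp A := by
  have key : ∀ n : ℕ, NormedSpace.exp A * B ^ n =
      (Complex.exp s • B) ^ n * NormedSpace.exp A := by
    intro n
    induction n with
    | zero => simp
    | succ n ih =>
      rw [pow_succ, ← mul_assoc, ih, mul_assoc, exp_mul_braid A B s h, pow_succ,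
        mul_assoc, smul_mul_assoc, mul_smul_comm]
  have eB : NormedSpace.exp B = ∑' n : ℕ, ((n.factorial : ℂ))⁻¹ • B ^ n :=
    congrFun (NormedSpace.exp_eq_tsum ℂ) B
  have eB' : NormedSpace.exp (Complex.exp s • B)
      = ∑' n : ℕ, ((n.factorial : ℂ))⁻¹ • (Complex.exp s • B) ^ n :=
    congrFun (NormedSpace.exp_eq_tsum ℂ) (Complex.exp s • B)
  rw [eB, eB']
  rw [← (NormedSpace.expSeries_summable' (𝕂 := ℂ) B).tsum_mul_left (NormedSpace.exp A),
      ← (NormedSpace.expSeries_summable' (𝕂 := ℂ) (Complex.exp s • B)).tsum_mul_right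
        (NormedSpace.exp A)]
  congr 1
  ext n
  rw [mul_smul_comm, smul_mul_assoc, key n]
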